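/- Let G be a κ-normal group whose cardinality κ = |G| is a singular cardinal. Then G admits a maximal left invariant κ-bounded topology; that is, there exists a topology τ on G such that (G, τ) is left topological, every nonempty τ-open set is left κ-large, τ has no isolated points, and every topology strictly finer than τ has an isolated point. -/

import Mathlib

open scoped Pointwise
open Cardinal

universe u

variable {G : Type u}

/-- `A` is left `κ`-large: `G = F * A` for some `F` with `|F| < κ`. -/
def LeftLarge [Group G] (κ : Cardinal.{u}) (A : Set G) : Prop :=
  ∃ F : Set G, #F < κ ∧ F * A = Set.univ

/-- `A` is right `κ`-large: `G = A * F` for some `F` with `|F| < κ`. -/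
def RightLarge [Group G] (κ : Cardinal.{u}) (A : Set G) : Prop :=
  ∃ F : Set G, #F < κ ∧ A * F = Set.univ

/-- `A` is `κ`-large: `G = F * A * F` for some `F` with `|F| < κ`. -/
def KLarge [Group G] (κ : Cardinal.{u}) (A : Set G) : Prop :=
  ∃ F : Set G, #F < κ ∧ F * A * F = Set.univ

/-- `A` is left `κ`-thick: for every `F` with `|F| < κ` there is `a ∈ A` with `F * a ⊆ A`. -/
def LeftThick [Group G] (κ : Cardinal.{u}) (A : Set G) : Prop :=
  ∀ F : Set G, #F < κ → ∃ a ∈ A, F * {a} ⊆ A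

/-- `A` is right `κ`-thick: for every `F` with `|F| < κ` there is `a ∈ A` with `a * F ⊆ A`. -/
def RightThick [Group G] (κ : Cardinal.{u}) (A : Set G) : Prop :=
  ∀ F : Set G, #F < κ → ∃ a ∈ A, {a} * F ⊆ A

/-- `A` is `κ`-thick: for every `F` with `|F| < κ` there is `a ∈ A` with `F * a * F ⊆ A`. -/
def KThick [Group G] (κ : Cardinal.{u}) (A : Set G) : Prop :=
  ∀ F : Set G, #F < κ → ∃ a ∈ A, F * {a} * F ⊆ A

/-- `G` is `κ`-normal: every subset of size `< κ` lies in a normal subgroup of size `< κ`. -/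
def KNormal (G : Type u) [Group G] (κ : Cardinal.{u}) : Prop :=
  ∀ F : Set G, #F < κ → ∃ H : Subgroup G, H.Normal ∧ #(H : Set G) < κ ∧ F ⊆ (H : Set G)

/-- `κ` is a singular cardinal: infinite, with cofinality strictly less than `κ`. -/
def Singular (κ : Cardinal.{u}) : Prop := ℵ₀ ≤ κ ∧ κ.ord.cof < κ

/-- A topology on a group is left invariant if all left shifts are continuous. -/
def LeftInvariant [Group G] (τ : TopologicalSpace G) : Prop :=
  ∀ g : G, @Continuous G G τ τ fun x => g * x

/-- A topology on a group of cardinality `κ` is `κ`-bounded if every nonempty open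
set is left `κ`-large. -/
def KBounded [Group G] (κ : Cardinal.{u}) (τ : TopologicalSpace G) : Prop :=
  ∀ U : Set G, τ.IsOpen U → U.Nonempty → LeftLarge κ U

/-- A topology has no isolated points if no singleton is open. -/
def NoIsolatedPoints (τ : TopologicalSpace G) : Prop :=
  ∀ x : G, ¬ τ.IsOpen {x}

/-- A topology (with no isolated points) is maximal if every strictly finer topology
has an isolated point (an open singleton). -/
def MaximalTopology (τ : TopologicalSpace G) : Prop :=
  ∀ τ' : TopologicalSpace G,
    (∀ U : Set G, τ.IsOpen U → τ'.IsOpen U) →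
    (∃ V : Set G, τ'.IsOpen V ∧ ¬ τ.IsOpen V) →
    ∃ x : G, τ'.IsOpen {x}

/- ====================  Auxiliary development  ==================== -/

attribute [local instance] Ultrafilter.mul Ultrafilter.semigroup

namespace KBddAux

open Set Filter

variable [Group G] {κ : Cardinal.{u}} {A T T₁ T₂ : Set G}

lemma small_insert (h0 : ℵ₀ ≤ κ) {s : Set G} (hs : #s < κ) (a : G) :
    #(insert a s : Set G) < κ :=
  lt_of_le_of_lt Cardinal.mk_insert_le
    (Cardinal.add_lt_of_lt h0 hs (lt_of_lt_of_le Cardinal.one_lt_aleph0 h0))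

lemma small_mul (h0 : ℵ₀ ≤ κ) {s t : Set G} (hs : #s < κ) (ht : #t < κ) :
    #(s * t : Set G) < κ := by
  have : (s * t : Set G) = Set.image2 (· * ·) s t := rfl
  rw [this]
  exact lt_of_le_of_lt Cardinal.mk_image2_le (Cardinal.mul_lt_of_lt h0 hs ht)

lemma small_image (f : G → G) {s : Set G} (hs : #s < κ) : #(f '' s) < κ :=
  lt_of_le_of_lt (Cardinal.mk_image_le) hs

lemma thick_mono (hsub : T₁ ⊆ T₂) (h : LeftThick κ T₁) : LeftThick κ T₂ := by
  intro F hF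
  obtain ⟨a, haT, ha⟩ := h F hF
  exact ⟨a, hsub haT, ha.trans hsub⟩

lemma thick_univ [Nonempty G] : LeftThick κ (Set.univ : Set G) := by
  intro F _
  exact ⟨1, Set.mem_univ _, Set.subset_univ _⟩

lemma thick_nonempty (h0 : ℵ₀ ≤ κ) (h : LeftThick κ T) : T.Nonempty := by
  obtain ⟨a, haT, -⟩ := h ∅ (by simpa using lt_of_lt_of_le Cardinal.aleph0_pos h0)
  exact ⟨a, haT⟩

/-- A left translate of a left thick set is left thick. -/
lemma thick_translate (h0 : ℵ₀ ≤ κ) (g : G) (h : LeftThick κ T) :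
    LeftThick κ {y | g * y ∈ T} := by
  intro F hF
  obtain ⟨a, -, ha⟩ := h ((fun f => g * f) '' insert 1 F)
    (small_image _ (small_insert h0 hF 1))
  have key : ∀ f ∈ insert (1 : G) F, g * (f * a) ∈ T := by
    intro f hf
    have : (g * f) * a ∈ T :=
      Set.mul_subset_iff.mp ha _ (Set.mem_image_of_mem _ hf) a rfl
    rwa [mul_assoc] at this
  refine ⟨a, ?_, ?_⟩
  · have := key 1 (Set.mem_insert _ _)
    simpa using this
  · rw [Set.mul_subset_iff]
    rintro f hf y rfl
    exact key f (Set.mem_insert_of_mem _ hf)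

/-- Key covering lemma: from singularity and `κ`-normality, `G` is covered by
fewer than `κ` normal subgroups each of size less than `κ`. -/
lemma exists_normal_cover (hκ : #G = κ) (hsing : Singular κ) (hnorm : KNormal G κ) :
    ∃ (ι : Type u) (H : ι → Subgroup G), #ι < κ ∧ (∀ i, #((H i : Set G)) < κ) ∧
      (∀ i, (H i).Normal) ∧ ∀ g : G, ∃ i, g ∈ H i := by
  have hGeq : #G = #(κ.ord.ToType) := by rw [Cardinal.mk_ord_toType]; exact hκ
  obtain ⟨e⟩ := Cardinal.eq.mp hGeq
  have hwo : IsWellOrder κ.ord.ToType (· < ·) := isWellOrder_lt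
  obtain ⟨S, hSu, hSc⟩ := Order.exists_cof_eq κ.ord.ToType
  have hScard : #S < κ := by
    rw [hSc, Ordinal.cof_toType]; exact hsing.2
  have hsmall : ∀ s : κ.ord.ToType, #(e ⁻¹' (Set.Iic s)) < κ := by
    intro s
    calc #(e ⁻¹' (Set.Iic s)) ≤ #(Set.Iic s) :=
          Cardinal.mk_preimage_of_injective _ _ e.injective
      _ ≤ #(Set.Iio s) + 1 := by
          rw [← Set.Iio_insert]
          exact Cardinal.mk_insert_le
      _ < κ := Cardinal.add_lt_of_lt hsing.1 (Cardinal.mk_Iio_ord_toType s)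
          (lt_of_lt_of_le Cardinal.one_lt_aleph0 hsing.1)
  choose Hs hnormal hsize hsub using
    fun s : S => hnorm (e ⁻¹' (Set.Iic s.1)) (hsmall s.1)
  refine ⟨S, Hs, hScard, hsize, hnormal, ?_⟩
  intro g
  obtain ⟨s, hsS, hs⟩ := hSu (e g)
  exact ⟨⟨s, hsS⟩, hsub ⟨s, hsS⟩ (by simpa using hs)⟩

/-- Key lemma: every left `κ`-thick set is left `κ`-large. -/
lemma thick_large (hκ : #G = κ) (hsing : Singular κ) (hnorm : KNormal G κ)
    (hT : LeftThick κ T) : LeftLarge κ T := by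
  obtain ⟨ι, H, hι, hsize, hnormal, hcov⟩ := exists_normal_cover hκ hsing hnorm
  choose a haT ha using fun i => hT (H i : Set G) (hsize i)
  refine ⟨Set.range (fun i => (a i)⁻¹), lt_of_le_of_lt Cardinal.mk_range_le hι, ?_⟩
  apply Set.eq_univ_of_forall
  intro g
  obtain ⟨i, hi⟩ := hcov g
  have h1 : a i * g * (a i)⁻¹ ∈ H i := (hnormal i).conj_mem g hi (a i)
  have h2 : (a i * g * (a i)⁻¹) * a i ∈ T :=
    Set.mul_subset_iff.mp (ha i) _ h1 (a i) rfl
  rw [inv_mul_cancel_right] at h2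
  exact Set.mem_mul.mpr ⟨(a i)⁻¹, Set.mem_range_self i, a i * g, h2,
    by rw [inv_mul_cancel_left]⟩

/-- If `A` is not left large then its complement is left thick. -/
lemma compl_thick_of_not_large (h0 : ℵ₀ ≤ κ) (hA : ¬ LeftLarge κ A) :
    LeftThick κ Aᶜ := by
  intro F hF
  have hF' : #(((insert 1 F : Set G))⁻¹ : Set G) < κ := by
    have heq : ((insert 1 F : Set G))⁻¹ = (fun x : G => x⁻¹) ⁻¹' insert 1 F := by
      ext x; simp [Set.mem_inv]
    rw [heq]
    exact lt_of_le_of_lt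
      (Cardinal.mk_preimage_of_injective _ _ (fun a b hab => by simpa using hab))
      (small_insert h0 hF 1)
  have hne : ((insert 1 F : Set G))⁻¹ * A ≠ Set.univ := fun h => hA ⟨_, hF', h⟩
  obtain ⟨g, hg⟩ : ∃ g, g ∉ ((insert 1 F : Set G))⁻¹ * A := by
    by_contra h
    push_neg at h
    exact hne (Set.eq_univ_of_forall h)
  have key : ∀ f ∈ insert (1 : G) F, f * g ∉ A := by
    intro f hf hfg
    exact hg (Set.mem_mul.mpr ⟨f⁻¹, Set.inv_mem_inv.mpr hf, f * g, hfg,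
      by rw [inv_mul_cancel_left]⟩)
  refine ⟨g, ?_, ?_⟩
  · have := key 1 (Set.mem_insert _ _)
    simpa using this
  · rw [Set.mul_subset_iff]
    rintro f hf y rfl
    exact key f (Set.mem_insert_of_mem _ hf)

/-- A left large set and a left thick set cannot be disjoint complements:
if `T` is large, `Tᶜ` is not thick. -/
lemma not_thick_compl_of_large (h0 : ℵ₀ ≤ κ) (hA : LeftLarge κ A) :
    ¬ LeftThick κ Aᶜ := by
  rintro hthick
  obtain ⟨F, hF, hFA⟩ := hA
  have hF' : #(((insert 1 F : Set G))⁻¹ : Set G) < κ := by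
    have heq : ((insert 1 F : Set G))⁻¹ = (fun x : G => x⁻¹) ⁻¹' insert 1 F := by
      ext x; simp [Set.mem_inv]
    rw [heq]
    exact lt_of_le_of_lt
      (Cardinal.mk_preimage_of_injective _ _ (fun a b hab => by simpa using hab))
      (small_insert h0 hF 1)
  obtain ⟨b, -, hb⟩ := hthick _ hF'
  have hbu : b ∈ F * A := by rw [hFA]; exact Set.mem_univ b
  obtain ⟨f, hf, t, ht, hft⟩ := Set.mem_mul.mp hbu
  have : f⁻¹ * b ∈ Aᶜ := Set.mul_subset_iff.mp hb f⁻¹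
    (Set.inv_mem_inv.mpr (Set.mem_insert_of_mem _ hf)) b rfl
  apply this
  rw [← hft, inv_mul_cancel_left]
  exact ht

/-- The intersection of two left thick sets is left thick. -/
lemma thick_inter (hκ : #G = κ) (hsing : Singular κ) (hnorm : KNormal G κ)
    (h₁ : LeftThick κ T₁) (h₂ : LeftThick κ T₂) : LeftThick κ (T₁ ∩ T₂) := by
  intro F hF
  obtain ⟨H, -, hHsize, hHsub⟩ := hnorm (insert 1 F) (small_insert hsing.1 hF 1)
  -- the set of elements whose whole `H`-translate lies in `T`
  have main : ∀ T : Set G, LeftThick κ T → LeftThick κ {c | (H : Set G) * {c} ⊆ T} := by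
    intro T hT F' hF'
    obtain ⟨b, -, hb⟩ := hT ((H : Set G) * insert 1 F')
      (small_mul hsing.1 hHsize (small_insert hsing.1 hF' 1))
    have key : ∀ f ∈ insert (1 : G) F', (H : Set G) * {f * b} ⊆ T := by
      intro f hf
      rw [Set.mul_subset_iff]
      rintro h hh y rfl
      have : (h * f) * b ∈ T := Set.mul_subset_iff.mp hb (h * f)
        (Set.mul_mem_mul hh hf) b rfl
      rwa [mul_assoc] at this
    refine ⟨b, ?_, ?_⟩
    · have := key 1 (Set.mem_insert _ _)
      simpa using this
    · rw [Set.mul_subset_iff]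
      rintro f hf y rfl
      exact key f (Set.mem_insert_of_mem _ hf)
  have hA₁ := main T₁ h₁
  have hA₂ := main T₂ h₂
  -- the two thick sets of "good centers" must intersect
  have hmeet : ({c | (H : Set G) * {c} ⊆ T₁} ∩ {c | (H : Set G) * {c} ⊆ T₂}).Nonempty := by
    by_contra hemp
    rw [Set.not_nonempty_iff_eq_empty] at hemp
    have hsub : {c | (H : Set G) * {c} ⊆ T₁} ⊆ {c | (H : Set G) * {c} ⊆ T₂}ᶜ := by
      intro c hc hc'
      exact Set.eq_empty_iff_forall_notMem.mp hemp c ⟨hc, hc'⟩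
    exact not_thick_compl_of_large hsing.1
      (thick_large hκ hsing hnorm hA₂) (thick_mono hsub hA₁)
  obtain ⟨c, hc₁, hc₂⟩ := hmeet
  have hc1 : c ∈ T₁ := by
    have := Set.mul_subset_iff.mp hc₁ 1 H.one_mem c rfl; simpa using this
  have hc2 : c ∈ T₂ := by
    have := Set.mul_subset_iff.mp hc₂ 1 H.one_mem c rfl; simpa using this
  refine ⟨c, ⟨hc1, hc2⟩, ?_⟩
  rw [Set.mul_subset_iff]
  intro f hf y hy
  have hyc : y = c := hy
  subst hyc
  have hfH : f ∈ (H : Set G) := hHsub (Set.mem_insert_of_mem _ hf)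
  exact ⟨Set.mul_subset_iff.mp hc₁ f hfH y rfl, Set.mul_subset_iff.mp hc₂ f hfH y rfl⟩

/-- The complement of a small set is left thick. -/
lemma compl_small_thick (hκ : #G = κ) (h0 : ℵ₀ ≤ κ) {s : Set G} (hs : #s < κ) :
    LeftThick κ sᶜ := by
  apply compl_thick_of_not_large h0
  rintro ⟨F, hF, hFs⟩
  have hlt : #(F * s : Set G) < κ := small_mul h0 hF hs
  rw [hFs, Cardinal.mk_univ, hκ] at hlt
  exact lt_irrefl _ hlt

/-! ### The idempotent ultrafilter -/

/-- Every member of an ultrafilter containing all thick sets is left large. -/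
lemma large_of_mem (hκ : #G = κ) (hsing : Singular κ) (hnorm : KNormal G κ)
    {U : Ultrafilter G} (hU : ∀ T : Set G, LeftThick κ T → T ∈ U) {A : Set G}
    (hA : A ∈ U) : LeftLarge κ A := by
  by_contra h
  have h1 : Aᶜ ∈ U := hU _ (compl_thick_of_not_large hsing.1 h)
  have h2 : (A ∩ Aᶜ : Set G) ∈ U := Filter.inter_mem hA h1
  rw [Set.inter_compl_self] at h2
  exact Ultrafilter.empty_notMem h2

lemma exists_good_idem (hκ : #G = κ) (hsing : Singular κ) (hnorm : KNormal G κ) :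
    ∃ U : Ultrafilter G, U * U = U ∧ ∀ T : Set G, LeftThick κ T → T ∈ U := by
  have : Nonempty G := ⟨1⟩
  set Thk : Set (Set G) := {T | LeftThick κ T} with hThk
  -- finite intersections of thick sets are thick
  have hfin : ∀ t : Set (Set G), t.Finite → t ⊆ Thk → LeftThick κ (⋂₀ t) := by
    intro t ht
    refine Set.Finite.induction_on t ht ?_ ?_
    · intro _
      rw [Set.sInter_empty]
      exact thick_univ
    · intro a s _ _ ih hsub
      rw [Set.sInter_insert]
      exact thick_inter hκ hsing hnorm (hsub (Set.mem_insert _ _))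
        (ih (fun x hx => hsub (Set.mem_insert_of_mem _ hx)))
  have hNeBot : (Filter.generate Thk).NeBot := by
    rw [Filter.generate_neBot_iff]
    intro t hsub htfin
    exact thick_nonempty hsing.1 (hfin t htfin hsub)
  haveI := hNeBot
  obtain ⟨p, hp⟩ := Ultrafilter.exists_le (Filter.generate Thk)
  set s : Set (Ultrafilter G) := {q | ∀ T : Set G, LeftThick κ T → T ∈ q} with hs
  have hclosed : IsClosed s := by
    have : s = ⋂ (T : Set G) (_ : LeftThick κ T), {q : Ultrafilter G | T ∈ q} := by
      ext q
      simp [hs, Set.mem_iInter]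
    rw [this]
    exact isClosed_iInter fun T => isClosed_iInter fun _ => ultrafilter_isClosed_basic T
  have hmul : ∀ q₁ ∈ s, ∀ q₂ ∈ s, q₁ * q₂ ∈ s := by
    intro q₁ h₁ q₂ h₂ T hT
    have : ∀ᶠ m in (↑(q₁ * q₂) : Filter G), m ∈ T := by
      rw [Ultrafilter.eventually_mul]
      refine Filter.Eventually.of_forall fun m => ?_
      have : {y | m * y ∈ T} ∈ q₂ := h₂ _ (thick_translate hsing.1 m hT)
      exact Filter.eventually_iff.mpr this
    exact Filter.eventually_mem_set.mp this
  obtain ⟨U, hUs, hUidem⟩ := exists_idempotent_in_compact_subsemigroup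
    Ultrafilter.continuous_mul_left s
    ⟨p, fun T hT => hp (Filter.mem_generate_of_mem hT)⟩
    hclosed.isCompact hmul
  exact ⟨U, hUidem, hUs⟩

/-! ### Star sets for idempotent ultrafilters -/

/-- From idempotency: the set of points all of whose `U`-translates stay in `A`. -/
lemma idem_mem {U : Ultrafilter G} (hidem : U * U = U) {A : Set G} (hA : A ∈ U) :
    {m | {y | m * y ∈ A} ∈ U} ∈ U := by
  have h1 : ∀ᶠ m in (↑(U * U) : Filter G), m ∈ A := by
    rw [hidem]
    exact Filter.eventually_mem_set.mpr hA
  have h2 := (Ultrafilter.eventually_mul U U (· ∈ A)).mp h1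
  exact Filter.eventually_iff.mp (h2.mono fun m hm => Filter.eventually_iff.mp hm)

/-- The star set of `A` with respect to `U`. -/
def starSet (U : Ultrafilter G) (A : Set G) : Set G :=
  A ∩ {a | {y | a * y ∈ A} ∈ U}

lemma starSet_mem {U : Ultrafilter G} (hidem : U * U = U) {A : Set G} (hA : A ∈ U) :
    starSet U A ∈ U :=
  Filter.inter_mem hA (idem_mem hidem hA)

lemma starSet_subset (U : Ultrafilter G) (A : Set G) : starSet U A ⊆ A :=
  Set.inter_subset_left

lemma starSet_key {U : Ultrafilter G} (hidem : U * U = U) {A : Set G} (hA : A ∈ U)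
    {a : G} (ha : a ∈ starSet U A) : {y | a * y ∈ starSet U A} ∈ U := by
  obtain ⟨haA, hB⟩ := ha
  have hB' : {y | a * y ∈ A} ∈ U := hB
  have hC : {y | {z | y * z ∈ {y' | a * y' ∈ A}} ∈ U} ∈ U := idem_mem hidem hB'
  refine Filter.mem_of_superset (Filter.inter_mem hB' hC) ?_
  rintro y ⟨hy1, hy2⟩
  refine ⟨hy1, ?_⟩
  have heq : {z | y * z ∈ {y' | a * y' ∈ A}} = {z | (a * y) * z ∈ A} := by
    ext z
    simp only [Set.mem_setOf_eq, mul_assoc]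
  have hgoal : {z | (a * y) * z ∈ A} ∈ U := by
    rw [← heq]; exact hy2
  exact hgoal

/-! ### The topology associated to an ultrafilter -/

/-- The left invariant topology determined by an ultrafilter `U`:
`V` is open iff for every `g ∈ V` the set `{y | g * y ∈ V}` belongs to `U`. -/
def ultraTop (U : Ultrafilter G) : TopologicalSpace G where
  IsOpen V := ∀ g ∈ V, {y | g * y ∈ V} ∈ U
  isOpen_univ := fun g _ => by
    have heq : {y : G | g * y ∈ Set.univ} = Set.univ := by ext y; simp
    rw [heq]; exact Filter.univ_mem
  isOpen_inter := by
    intro V W hV hW g hg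
    have : {y | g * y ∈ V ∩ W} = {y | g * y ∈ V} ∩ {y | g * y ∈ W} := rfl
    rw [this]
    exact Filter.inter_mem (hV g hg.1) (hW g hg.2)
  isOpen_sUnion := by
    intro s hs g hg
    obtain ⟨V, hVs, hgV⟩ := hg
    exact Filter.mem_of_superset (hs V hVs g hgV)
      (fun y hy => Set.mem_sUnion.mpr ⟨V, hVs, hy⟩)

lemma ultraTop_isOpen {U : Ultrafilter G} {V : Set G} :
    (ultraTop U).IsOpen V ↔ ∀ g ∈ V, {y | g * y ∈ V} ∈ U := Iff.rfl

lemma ultraTop_isOpen' {U : Ultrafilter G} {V : Set G} :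
    @IsOpen G (ultraTop U) V ↔ ∀ g ∈ V, {y | g * y ∈ V} ∈ U := Iff.rfl

end KBddAux

/-- Every `κ`-normal group of singular cardinality `κ` admits a
maximal left invariant `κ`-bounded topology. -/
theorem exists_maximal_kBounded_topology_of_kNormal_singular {G : Type u} [Group G]
    (κ : Cardinal.{u}) (hκ : #G = κ) (hsing : Singular κ) (hnorm : KNormal G κ) :
    ∃ τ : TopologicalSpace G, LeftInvariant τ ∧ KBounded κ τ ∧
      NoIsolatedPoints τ ∧ MaximalTopology τ := by
  classical
  obtain ⟨U, hidem, hU⟩ := KBddAux.exists_good_idem hκ hsing hnorm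
  have hone : (1 : Cardinal.{u}) < κ := lt_of_lt_of_le Cardinal.one_lt_aleph0 hsing.1
  refine ⟨KBddAux.ultraTop U, ?_, ?_, ?_, ?_⟩
  · -- Left invariance
    intro g
    rw [continuous_def]
    intro V hV
    rw [KBddAux.ultraTop_isOpen'] at hV ⊢
    intro h hh
    have heq : {y | h * y ∈ (fun x => g * x) ⁻¹' V} = {y | (g * h) * y ∈ V} := by
      ext y
      simp [Set.mem_preimage, mul_assoc]
    rw [heq]
    exact hV (g * h) hh
  · -- κ-boundedness
    intro V hV hVne
    obtain ⟨g, hg⟩ := hVne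
    rw [KBddAux.ultraTop_isOpen] at hV
    have hmem : {y | g * y ∈ V} ∈ U := hV g hg
    obtain ⟨F, hF, hFW⟩ := KBddAux.large_of_mem hκ hsing hnorm hU hmem
    refine ⟨F * {g⁻¹}, ?_, ?_⟩
    · refine KBddAux.small_mul hsing.1 hF ?_
      rw [Cardinal.mk_singleton]
      exact hone
    · apply Set.eq_univ_of_forall
      intro x
      have hx : x ∈ F * {y | g * y ∈ V} := by rw [hFW]; trivial
      obtain ⟨f, hf, w, hw, rfl⟩ := Set.mem_mul.mp hx
      refine Set.mem_mul.mpr ⟨f * g⁻¹, Set.mul_mem_mul hf (Set.mem_singleton _),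
        g * w, hw, ?_⟩
      group
  · -- No isolated points
    intro x hx
    rw [KBddAux.ultraTop_isOpen] at hx
    have h1 : {y | x * y ∈ ({x} : Set G)} ∈ U := hx x rfl
    have heq : {y | x * y ∈ ({x} : Set G)} = ({1} : Set G) := by
      ext y
      simp [mul_eq_left]
    rw [heq] at h1
    have h2 : (({1} : Set G)ᶜ : Set G) ∈ U := by
      refine hU _ (KBddAux.compl_small_thick hκ hsing.1 ?_)
      rw [Cardinal.mk_singleton]
      exact hone
    have h3 : (({1} : Set G) ∩ ({1} : Set G)ᶜ) ∈ U := Filter.inter_mem h1 h2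
    rw [Set.inter_compl_self] at h3
    exact Ultrafilter.empty_notMem h3
  · -- Maximality
    intro τ' hle hne
    obtain ⟨V₀, hV₀, hV₀n⟩ := hne
    rw [KBddAux.ultraTop_isOpen] at hV₀n
    push_neg at hV₀n
    obtain ⟨x, hxV, hxn⟩ := hV₀n
    set A : Set G := {y | x * y ∈ V₀}ᶜ with hAdef
    have hA : A ∈ U := (Ultrafilter.compl_mem_iff_notMem).mpr hxn
    set O : Set G := insert x ((fun a => x * a) '' KBddAux.starSet U A) with hOdef
    have hOopen : (KBddAux.ultraTop U).IsOpen O := by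
      rw [KBddAux.ultraTop_isOpen]
      intro g hg
      rcases Set.mem_insert_iff.mp hg with rfl | hmem
      · refine Filter.mem_of_superset (KBddAux.starSet_mem hidem hA) ?_
        intro a haS
        exact Set.mem_insert_of_mem _ ⟨a, haS, rfl⟩
      · obtain ⟨a, haS, rfl⟩ := hmem
        refine Filter.mem_of_superset (KBddAux.starSet_key hidem hA haS) ?_
        intro y hy
        have : (fun a => x * a) (a * y) = (x * a) * y := by
          simp [mul_assoc]
        refine Set.mem_insert_of_mem _ ⟨a * y, hy, this⟩
    have hOV : O ∩ V₀ = {x} := by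
      ext y
      constructor
      · rintro ⟨hyO, hyV⟩
        rcases Set.mem_insert_iff.mp hyO with rfl | hmem
        · rfl
        · obtain ⟨a, haS, rfl⟩ := hmem
          have haA : a ∈ A := KBddAux.starSet_subset U A haS
          exact absurd hyV haA
      · rintro rfl
        exact ⟨Set.mem_insert _ _, hxV⟩
    refine ⟨x, ?_⟩
    rw [← hOV]
    exact @IsOpen.inter G τ' O V₀ (hle O hOopen) hV₀
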